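/- arXiv:math/9902048 — 2 statements merged into one kernel-verified Lean document; each statement's English description precedes it below -/
import Mathlib

section
/- Let G be a finite abelian group and let H₂ = {x ∈ G : x² = 1} be its maximal elementary abelian 2-subgroup. Then the induction map 𝔹_{H₂} → 𝔹_G induced by the inclusion H₂ ↪ G is injective, and its image equals the torsion subgroup of 𝔹_G (which is an elementary abelian 2-group). -/
namespace SingOrbit

variable (G : Type*) [Group G]

/-- The map from conjugacy classes to the abelianization. -/
def classAb : ConjClasses G → Additive (Abelianization G) :=
  Quotient.lift (fun g : G => Additive.ofMul (Abelianization.of g)) <| by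
    intro a b hab
    obtain ⟨c, hc⟩ := isConj_iff.mp (hab : IsConj a b)
    subst hc
    show Additive.ofMul (Abelianization.of a) = Additive.ofMul (Abelianization.of (c * a * c⁻¹))
    congr 1
    rw [map_mul, map_mul, map_inv, mul_comm (Abelianization.of c) (Abelianization.of a),
      mul_inv_cancel_right]

/-- Nontrivial conjugacy classes. -/
def NCC := {c : ConjClasses G // c ≠ 1}

/-- The homomorphism `φ` from the free abelian group on the nontrivial conjugacy classes
to the abelianization, sending a conjugacy class to the image of any representative. -/
noncomputable def phi : FreeAbelianGroup (NCC G) →+ Additive (Abelianization G) :=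
  FreeAbelianGroup.lift fun c => classAb G c.1

/-- The basis element of the free abelian group corresponding to a conjugacy class
(`0` for the trivial class). -/
noncomputable def clsC (c : ConjClasses G) : FreeAbelianGroup (NCC G) :=
  letI := Classical.dec (c = 1)
  if h : c = 1 then 0 else FreeAbelianGroup.of ⟨c, h⟩

/-- The basis element corresponding to the conjugacy class of a group element. -/
noncomputable def clsF (x : G) : FreeAbelianGroup (NCC G) := clsC G (ConjClasses.mk x)

/-- The subgroup generated by the elements `x̂ + x̂⁻¹`. -/
noncomputable def NSub : AddSubgroup (FreeAbelianGroup (NCC G)) :=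
  AddSubgroup.closure {a | ∃ x : G, a = clsF G x + clsF G x⁻¹}

/-- The group `𝔹_G` of singular orbit data: `(ker φ) / N`. -/
noncomputable def SOD := (phi G).ker ⧸ ((NSub G).addSubgroupOf (phi G).ker)

noncomputable instance : AddCommGroup (SOD G) :=
  inferInstanceAs (AddCommGroup ((phi G).ker ⧸ ((NSub G).addSubgroupOf (phi G).ker)))

variable {G}

lemma classAb_mk (x : G) :
    classAb G (ConjClasses.mk x) = Additive.ofMul (Abelianization.of x) := rfl

lemma mk_eq_one_iff {x : G} : ConjClasses.mk x = 1 ↔ x = 1 := by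
  rw [ConjClasses.one_eq_mk_one, ConjClasses.mk_eq_mk_iff_isConj, isConj_one_left]

lemma phi_of (c : NCC G) : phi G (FreeAbelianGroup.of c) = classAb G c.1 :=
  FreeAbelianGroup.lift_apply_of _ _

lemma phi_clsF (x : G) : phi G (clsF G x) = Additive.ofMul (Abelianization.of x) := by
  rw [clsF, clsC]
  split_ifs with h
  · have hx : x = 1 := mk_eq_one_iff.mp h
    subst hx
    simp
  · exact (phi_of (G := G) ⟨ConjClasses.mk x, h⟩).trans (classAb_mk x)

/-- The element of the free abelian group associated to a list of group elements. -/
noncomputable def sumF (l : List G) : FreeAbelianGroup (NCC G) := (l.map (clsF G)).sum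

lemma sumF_nil : sumF ([] : List G) = 0 := rfl

lemma sumF_cons (a : G) (t : List G) : sumF (a :: t) = clsF G a + sumF t := by
  simp [sumF]

lemma phi_sumF (l : List G) :
    phi G (sumF l) = Additive.ofMul (Abelianization.of l.prod) := by
  induction l with
  | nil => simp [sumF_nil]
  | cons a t ih =>
    rw [sumF_cons, map_add, phi_clsF, ih, List.prod_cons, map_mul, ofMul_mul]

lemma abOf_eq_one_iff {x : G} : Abelianization.of x = 1 ↔ x ∈ commutator G :=
  QuotientGroup.eq_one_iff x

lemma sumF_mem_ker {l : List G} (h : l.prod ∈ commutator G) : sumF l ∈ (phi G).ker := by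
  rw [AddMonoidHom.mem_ker, phi_sumF, abOf_eq_one_iff.mpr h]
  rfl

/-- The singular orbit datum `[x̂₁, …, x̂_q]` associated to a list of group elements whose
product lies in the commutator subgroup. -/
noncomputable def data (l : List G) (h : l.prod ∈ commutator G) : SOD G :=
  (QuotientAddGroup.mk ⟨sumF l, sumF_mem_ker h⟩ : SOD G)

/-! ### Functoriality -/

variable {H : Type*} [Group H]

noncomputable def pushC (f : G →* H) : ConjClasses G → FreeAbelianGroup (NCC H) :=
  Quotient.lift (fun x : G => clsF H (f x)) <| by
    intro a b hab
    show clsF H (f a) = clsF H (f b)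
    have hmk : ConjClasses.mk (f a) = ConjClasses.mk (f b) :=
      ConjClasses.mk_eq_mk_iff_isConj.mpr (f.map_isConj (hab : IsConj a b))
    rw [clsF, clsF, hmk]

lemma pushC_mk (f : G →* H) (x : G) : pushC f (ConjClasses.mk x) = clsF H (f x) := rfl

/-- The induced map on free abelian groups. -/
noncomputable def FMap (f : G →* H) : FreeAbelianGroup (NCC G) →+ FreeAbelianGroup (NCC H) :=
  FreeAbelianGroup.lift fun c => pushC f c.1

lemma FMap_clsF (f : G →* H) (x : G) : FMap f (clsF G x) = clsF H (f x) := by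
  by_cases h : ConjClasses.mk x = 1
  · have hx : x = 1 := mk_eq_one_iff.mp h
    subst hx
    have h1 : clsF G (1 : G) = 0 := by
      rw [clsF, clsC, dif_pos (mk_eq_one_iff.mpr rfl)]
    have h2 : clsF H ((f 1 : H)) = 0 := by
      rw [map_one, clsF, clsC, dif_pos (mk_eq_one_iff.mpr rfl)]
    rw [h1, map_zero, h2]
  · have hx : clsF G x = FreeAbelianGroup.of ⟨ConjClasses.mk x, h⟩ := by
      rw [clsF, clsC, dif_neg h]
    rw [hx, FMap]
    exact FreeAbelianGroup.lift_apply_of (fun c : NCC G => pushC f c.1) _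

lemma FMap_sumF (f : G →* H) (l : List G) : FMap f (sumF l) = sumF (l.map f) := by
  induction l with
  | nil => simp [sumF_nil]
  | cons a t ih =>
    rw [sumF_cons, map_add, FMap_clsF, ih, List.map_cons, sumF_cons]

lemma phi_FMap (f : G →* H) (a : FreeAbelianGroup (NCC G)) :
    phi H (FMap f a) = MonoidHom.toAdditive (Abelianization.map f) (phi G a) := by
  have : (phi H).comp (FMap f)
      = (MonoidHom.toAdditive (Abelianization.map f)).comp (phi G) := by
    apply FreeAbelianGroup.lift_ext
    intro c
    obtain ⟨x, hx⟩ := ConjClasses.mk_surjective c.1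
    simp only [AddMonoidHom.comp_apply]
    rw [show FMap f (FreeAbelianGroup.of c) = pushC f c.1 from FreeAbelianGroup.lift_apply_of _ _,
      phi_of, ← hx, pushC_mk, phi_clsF, classAb_mk]
    show Additive.ofMul (Abelianization.of (f x))
      = Additive.ofMul (Abelianization.map f (Abelianization.of x))
    rw [Abelianization.map_of]
  calc phi H (FMap f a) = ((phi H).comp (FMap f)) a := rfl
    _ = _ := by rw [this]; rfl

lemma FMap_mem_ker (f : G →* H) {a : FreeAbelianGroup (NCC G)} (ha : a ∈ (phi G).ker) :
    FMap f a ∈ (phi H).ker := by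
  rw [AddMonoidHom.mem_ker] at ha ⊢
  rw [phi_FMap, ha, map_zero]

lemma FMap_mem_NSub (f : G →* H) {a : FreeAbelianGroup (NCC G)} (ha : a ∈ NSub G) :
    FMap f a ∈ NSub H := by
  induction ha using AddSubgroup.closure_induction with
  | mem x hx =>
    obtain ⟨y, rfl⟩ := hx
    rw [map_add, FMap_clsF, FMap_clsF]
    apply AddSubgroup.subset_closure
    exact ⟨f y, by rw [map_inv]⟩
  | zero => rw [map_zero]; exact (NSub H).zero_mem
  | add x y _ _ hx hy => rw [map_add]; exact (NSub H).add_mem hx hy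
  | neg x _ hx => rw [map_neg]; exact (NSub H).neg_mem hx

noncomputable def kFMap (f : G →* H) : (phi G).ker →+ (phi H).ker :=
  AddMonoidHom.codRestrict ((FMap f).domRestrict ((phi G).ker)) _
    (fun a => FMap_mem_ker f a.2)

/-- The functorial homomorphism `𝔹_f : 𝔹_G → 𝔹_H` induced by a group homomorphism. -/
noncomputable def SODmap (f : G →* H) : SOD G →+ SOD H :=
  QuotientAddGroup.map _ _ (kFMap f) (by
    intro x hx
    rw [AddSubgroup.mem_addSubgroupOf] at hx
    rw [AddSubgroup.mem_comap, AddSubgroup.mem_addSubgroupOf]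
    exact FMap_mem_NSub f hx)

lemma SODmap_data (f : G →* H) (l : List G) (h : l.prod ∈ commutator G)
    (h' : (l.map f).prod ∈ commutator H) :
    SODmap f (data l h) = data (l.map f) h' := by
  show QuotientAddGroup.map _ _ (kFMap f) _ (QuotientAddGroup.mk _) = _
  rw [QuotientAddGroup.map_mk]
  unfold data
  congr 1
  exact Subtype.ext (FMap_sumF f l)

/-! ### Auxiliary development for stmt11 -/

lemma clsF_one : clsF G (1 : G) = 0 := by
  rw [clsF, clsC, dif_pos (mk_eq_one_iff.mpr rfl)]

lemma clsF_ne {g : G} (h : g ≠ 1) :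
    clsF G g = FreeAbelianGroup.of ⟨ConjClasses.mk g, fun hc => h (mk_eq_one_iff.mp hc)⟩ := by
  rw [clsF, clsC, dif_neg]

lemma phi_NSub {a : FreeAbelianGroup (NCC G)} (ha : a ∈ NSub G) : phi G a = 0 := by
  induction ha using AddSubgroup.closure_induction with
  | mem x hx =>
    obtain ⟨y, rfl⟩ := hx
    rw [map_add, phi_clsF, phi_clsF, ← ofMul_mul, ← map_mul, mul_inv_cancel, map_one, ofMul_one]
  | zero => rw [map_zero]
  | add x y _ _ hx hy => rw [map_add, hx, hy, add_zero]
  | neg x _ hx => rw [map_neg, hx, neg_zero]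

lemma freeAb_torsion_free {X : Type*} {k : ℕ} (hk : k ≠ 0) {x : FreeAbelianGroup X}
    (h : k • x = 0) : x = 0 := by
  set e := FreeAbelianGroup.equivFinsupp X with he
  have h2 : k • e x = 0 := by rw [← map_nsmul, h, map_zero]
  have h3 : e x = 0 := by
    ext a
    have h4 := congrArg (fun y => (Finsupp.applyAddHom a : (X →₀ ℤ) →+ ℤ) y) h2
    simp only [map_nsmul, map_zero] at h4
    have h5 : (k : ℤ) * (e x) a = 0 := by
      simpa [nsmul_eq_mul] using h4
    rcases mul_eq_zero.mp h5 with h' | h'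
    · exact absurd (by exact_mod_cast h') hk
    · simpa using h'
  exact e.injective (h3.trans (map_zero e).symm)

section Aux

variable {G : Type*} [CommGroup G]

open Classical in
/-- The "involution part" map on conjugacy classes. -/
noncomputable def tC (H₂ : Subgroup G) (hH₂ : ∀ g : G, g ∈ H₂ ↔ g ^ 2 = 1) :
    ConjClasses G → FreeAbelianGroup (NCC H₂) :=
  Quotient.lift
    (fun g : G => if h : g ^ 2 = 1 then clsF H₂ (⟨g, (hH₂ g).mpr h⟩ : H₂) else 0) <| by
    intro a b hab
    have hab' : a = b := isConj_iff_eq.mp hab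
    subst hab'; rfl

noncomputable def Tmap (H₂ : Subgroup G) (hH₂ : ∀ g : G, g ∈ H₂ ↔ g ^ 2 = 1) :
    FreeAbelianGroup (NCC G) →+ FreeAbelianGroup (NCC H₂) :=
  FreeAbelianGroup.lift fun c => tC H₂ hH₂ c.1

lemma Tmap_clsF_pos (H₂ : Subgroup G) (hH₂ : ∀ g : G, g ∈ H₂ ↔ g ^ 2 = 1)
    (g : G) (h : g ^ 2 = 1) :
    Tmap H₂ hH₂ (clsF G g) = clsF H₂ (⟨g, (hH₂ g).mpr h⟩ : H₂) := by
  by_cases h1 : g = 1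
  · subst h1
    rw [clsF_one, map_zero]
    have h2 : (⟨(1 : G), (hH₂ 1).mpr (one_pow 2)⟩ : H₂) = 1 := rfl
    rw [h2, clsF_one]
  · rw [clsF_ne h1, Tmap]
    refine (FreeAbelianGroup.lift_apply_of (fun c : NCC G => tC H₂ hH₂ c.1) _).trans ?_
    show tC H₂ hH₂ (ConjClasses.mk g) = _
    rw [tC, ConjClasses.mk, Quotient.lift_mk, dif_pos h]

lemma Tmap_clsF_neg (H₂ : Subgroup G) (hH₂ : ∀ g : G, g ∈ H₂ ↔ g ^ 2 = 1)
    (g : G) (h : ¬ g ^ 2 = 1) :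
    Tmap H₂ hH₂ (clsF G g) = 0 := by
  have h1 : g ≠ 1 := fun hg => h (by rw [hg, one_pow])
  rw [clsF_ne h1, Tmap]
  refine (FreeAbelianGroup.lift_apply_of (fun c : NCC G => tC H₂ hH₂ c.1) _).trans ?_
  show tC H₂ hH₂ (ConjClasses.mk g) = _
  rw [tC, ConjClasses.mk, Quotient.lift_mk, dif_neg h]

lemma Tmap_FMap (H₂ : Subgroup G) (hH₂ : ∀ g : G, g ∈ H₂ ↔ g ^ 2 = 1)
    (z : FreeAbelianGroup (NCC H₂)) :
    Tmap H₂ hH₂ (FMap H₂.subtype z) = z := by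
  have key : (Tmap H₂ hH₂).comp (FMap H₂.subtype) = AddMonoidHom.id _ := by
    apply FreeAbelianGroup.lift_ext
    intro c
    obtain ⟨h, hh⟩ := ConjClasses.mk_surjective c.1
    have hne : h ≠ 1 := by
      intro h1; exact c.2 (by rw [← hh, h1, mk_eq_one_iff.mpr rfl])
    have hc : (FreeAbelianGroup.of c : FreeAbelianGroup (NCC H₂)) = clsF H₂ h := by
      rw [clsF_ne hne]
      congr 1
      exact Subtype.ext hh.symm
    simp only [AddMonoidHom.comp_apply, AddMonoidHom.id_apply]
    rw [hc, show FMap H₂.subtype (clsF H₂ h) = clsF G (h : G) from FMap_clsF _ _,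
      Tmap_clsF_pos H₂ hH₂ _ ((hH₂ (h : G)).mp h.2)]
  exact DFunLike.congr_fun key z

lemma inv_eq_self_of_sq {g : G} (h : g ^ 2 = 1) : g⁻¹ = g := by
  rw [pow_two] at h
  exact inv_eq_of_mul_eq_one_right h

lemma Tmap_NSub (H₂ : Subgroup G) (hH₂ : ∀ g : G, g ∈ H₂ ↔ g ^ 2 = 1)
    {a : FreeAbelianGroup (NCC G)} (ha : a ∈ NSub G) :
    Tmap H₂ hH₂ a ∈ NSub H₂ := by
  induction ha using AddSubgroup.closure_induction with
  | mem x hx =>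
    obtain ⟨y, rfl⟩ := hx
    by_cases h : y ^ 2 = 1
    · have h' : y⁻¹ ^ 2 = 1 := by rw [inv_pow, h, inv_one]
      rw [map_add, Tmap_clsF_pos H₂ hH₂ y h, Tmap_clsF_pos H₂ hH₂ y⁻¹ h']
      apply AddSubgroup.subset_closure
      exact ⟨⟨y, (hH₂ y).mpr h⟩, rfl⟩
    · have h' : ¬ y⁻¹ ^ 2 = 1 := by
        intro hy; exact h (by rw [← inv_inv y, inv_pow, hy, inv_one])
      rw [map_add, Tmap_clsF_neg H₂ hH₂ y h, Tmap_clsF_neg H₂ hH₂ y⁻¹ h', add_zero]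
      exact (NSub _).zero_mem
  | zero => rw [map_zero]; exact (NSub _).zero_mem
  | add x y _ _ hx hy => rw [map_add]; exact (NSub _).add_mem hx hy
  | neg x _ hx => rw [map_neg]; exact (NSub _).neg_mem hx

end Aux

section Aux2

variable {G : Type*} [CommGroup G]

open Classical in
/-- The "free part" map on conjugacy classes, relative to an embedding into `ℕ`
used to pick representatives of pairs `{g, g⁻¹}`. -/
noncomputable def frC (e : G ↪ ℕ) : ConjClasses G → FreeAbelianGroup (NCC G) :=
  Quotient.lift
    (fun g : G => if g ^ 2 = 1 then 0 else if e g < e g⁻¹ then clsF G g else -clsF G g⁻¹) <| by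
    intro a b hab
    have hab' : a = b := isConj_iff_eq.mp hab
    subst hab'; rfl

noncomputable def frMap (e : G ↪ ℕ) :
    FreeAbelianGroup (NCC G) →+ FreeAbelianGroup (NCC G) :=
  FreeAbelianGroup.lift fun c => frC e c.1

lemma frMap_sq (e : G ↪ ℕ) {g : G} (h : g ^ 2 = 1) : frMap e (clsF G g) = 0 := by
  by_cases h1 : g = 1
  · subst h1; rw [clsF_one, map_zero]
  · rw [clsF_ne h1, frMap]
    refine (FreeAbelianGroup.lift_apply_of (fun c : NCC G => frC e c.1) _).trans ?_
    show frC e (ConjClasses.mk g) = _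
    rw [frC, ConjClasses.mk, Quotient.lift_mk, if_pos h]

open Classical in
lemma frC_mk (e : G ↪ ℕ) (g : G) :
    frC e (ConjClasses.mk g)
      = if g ^ 2 = 1 then 0 else if e g < e g⁻¹ then clsF G g else -clsF G g⁻¹ := rfl

lemma frMap_lt (e : G ↪ ℕ) {g : G} (h : ¬ g ^ 2 = 1) (hlt : e g < e g⁻¹) :
    frMap e (clsF G g) = clsF G g := by
  have h1 : g ≠ 1 := fun hg => h (by rw [hg, one_pow])
  rw [clsF_ne h1, frMap]
  refine (FreeAbelianGroup.lift_apply_of (fun c : NCC G => frC e c.1) _).trans ?_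
  show frC e (ConjClasses.mk g) = _
  rw [frC_mk, if_neg h, if_pos hlt, clsF_ne h1]

lemma frMap_ge (e : G ↪ ℕ) {g : G} (h : ¬ g ^ 2 = 1) (hge : ¬ e g < e g⁻¹) :
    frMap e (clsF G g) = -clsF G g⁻¹ := by
  have h1 : g ≠ 1 := fun hg => h (by rw [hg, one_pow])
  rw [clsF_ne h1, frMap]
  refine (FreeAbelianGroup.lift_apply_of (fun c : NCC G => frC e c.1) _).trans ?_
  show frC e (ConjClasses.mk g) = _
  rw [frC_mk, if_neg h, if_neg hge]

lemma inv_sq_ne {g : G} (h : ¬ g ^ 2 = 1) : ¬ g⁻¹ ^ 2 = 1 := by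
  intro hy; exact h (by rw [← inv_inv g, inv_pow, hy, inv_one])

lemma frMap_NSub (e : G ↪ ℕ) {a : FreeAbelianGroup (NCC G)} (ha : a ∈ NSub G) :
    frMap e a = 0 := by
  induction ha using AddSubgroup.closure_induction with
  | mem x hx =>
    obtain ⟨y, rfl⟩ := hx
    rw [map_add]
    by_cases h : y ^ 2 = 1
    · rw [frMap_sq e h, frMap_sq e (by rw [inv_pow, h, inv_one]), add_zero]
    · have h' := inv_sq_ne h
      have hne : y ≠ y⁻¹ := by
        intro hy
        apply h
        rw [pow_two]
        nth_rewrite 2 [hy]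
        exact mul_inv_cancel y
      by_cases hlt : e y < e y⁻¹
      · have hge : ¬ e y⁻¹ < e y⁻¹⁻¹ := by rw [inv_inv]; exact lt_asymm hlt
        rw [frMap_lt e h hlt, frMap_ge e h' hge, inv_inv, add_neg_cancel]
      · have hlt' : e y⁻¹ < e y⁻¹⁻¹ := by
          rw [inv_inv]
          exact lt_of_le_of_ne (not_lt.mp hlt) fun hc => hne (e.injective hc).symm
        rw [frMap_ge e h hlt, frMap_lt e h' hlt', neg_add_cancel]
  | zero => rw [map_zero]
  | add x y _ _ hx hy => rw [map_add, hx, hy, add_zero]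
  | neg x _ hx => rw [map_neg, hx, neg_zero]

lemma decomp (e : G ↪ ℕ) (H₂ : Subgroup G) (hH₂ : ∀ g : G, g ∈ H₂ ↔ g ^ 2 = 1)
    (x : FreeAbelianGroup (NCC G)) :
    x - frMap e x - FMap H₂.subtype (Tmap H₂ hH₂ x) ∈ NSub G := by
  set D : FreeAbelianGroup (NCC G) →+ FreeAbelianGroup (NCC G) :=
    AddMonoidHom.id _ - frMap e - (FMap H₂.subtype).comp (Tmap H₂ hH₂) with hD
  have hDapp : ∀ y, D y = y - frMap e y - FMap H₂.subtype (Tmap H₂ hH₂ y) := by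
    intro y
    simp [hD, AddMonoidHom.sub_apply]
  have hgen : ∀ g : G, D (clsF G g) ∈ NSub G := by
    intro g
    rw [hDapp]
    by_cases h : g ^ 2 = 1
    · rw [frMap_sq e h, Tmap_clsF_pos H₂ hH₂ g h, sub_zero,
        show FMap H₂.subtype (clsF H₂ (⟨g, (hH₂ g).mpr h⟩ : H₂)) = clsF G g from
          FMap_clsF _ _, sub_self]
      exact (NSub G).zero_mem
    · rw [Tmap_clsF_neg H₂ hH₂ g h, map_zero, sub_zero]
      by_cases hlt : e g < e g⁻¹
      · rw [frMap_lt e h hlt, sub_self]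
        exact (NSub G).zero_mem
      · rw [frMap_ge e h hlt, sub_neg_eq_add]
        exact AddSubgroup.subset_closure ⟨g, rfl⟩
  have hall : ∀ y, D y ∈ NSub G := by
    intro y
    induction y using FreeAbelianGroup.induction_on with
    | zero => rw [map_zero]; exact (NSub G).zero_mem
    | of c =>
      obtain ⟨g, hg⟩ := ConjClasses.mk_surjective c.1
      have hne : g ≠ 1 := by
        intro h1; exact c.2 (by rw [← hg, h1, mk_eq_one_iff.mpr rfl])
      have hofc : (FreeAbelianGroup.of c : FreeAbelianGroup (NCC G)) = clsF G g := by
        rw [clsF_ne hne]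
        congr 1
        exact Subtype.ext hg.symm
      rw [hofc]; exact hgen g
    | neg c ih => rw [map_neg]; exact (NSub G).neg_mem ih
    | add a b ha hb => rw [map_add]; exact (NSub G).add_mem ha hb
  have := hall x
  rwa [hDapp] at this

lemma of_injective : Function.Injective (Abelianization.of : G → Abelianization G) :=
  Abelianization.equivOfComm.injective

lemma abmap_inj (H₂ : Subgroup G) :
    Function.Injective (Abelianization.map H₂.subtype) := by
  intro a b hab
  obtain ⟨x, rfl⟩ := QuotientGroup.mk_surjective a
  obtain ⟨y, rfl⟩ := QuotientGroup.mk_surjective b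
  have hx : (QuotientGroup.mk x : Abelianization H₂) = Abelianization.of x := rfl
  have hy : (QuotientGroup.mk y : Abelianization H₂) = Abelianization.of y := rfl
  rw [hx, hy, Abelianization.map_of, Abelianization.map_of] at hab
  rw [hx, hy]
  exact congrArg _ (H₂.subtype_injective (of_injective hab))

lemma phi_sub_eq_zero (H₂ : Subgroup G) {z : FreeAbelianGroup (NCC H₂)}
    (hz : phi G (FMap H₂.subtype z) = 0) : phi H₂ z = 0 := by
  have h2 : Function.Injective
      ⇑(MonoidHom.toAdditive (Abelianization.map H₂.subtype)) := by
    intro a b hab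
    have h3 : Abelianization.map H₂.subtype (Additive.toMul a)
        = Abelianization.map H₂.subtype (Additive.toMul b) := hab
    exact Additive.toMul.injective (abmap_inj H₂ h3)
  apply h2
  rw [map_zero, ← phi_FMap, hz]

lemma SODmap_mk {H : Type*} [Group H] (f : G →* H) (x : (phi G).ker) :
    SODmap f (QuotientAddGroup.mk x : SOD G) = (QuotientAddGroup.mk (kFMap f x) : SOD H) := by
  show QuotientAddGroup.map _ _ (kFMap f) _ (QuotientAddGroup.mk _) = _
  rw [QuotientAddGroup.map_mk]

lemma SOD_mk_eq_zero {x : (phi G).ker} :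
    @Eq (SOD G) (QuotientAddGroup.mk x) 0 ↔ (x : FreeAbelianGroup (NCC G)) ∈ NSub G := by
  exact (QuotientAddGroup.eq_zero_iff _).trans AddSubgroup.mem_addSubgroupOf

end Aux2

section Main

variable {G : Type*} [CommGroup G]

lemma kFMap_coe {H : Type*} [Group H] (f : G →* H) (x : (phi G).ker) :
    (kFMap f x : FreeAbelianGroup (NCC H)) = FMap f (x : FreeAbelianGroup (NCC G)) := rfl

lemma SODmap_inj (H₂ : Subgroup G) (hH₂ : ∀ g : G, g ∈ H₂ ↔ g ^ 2 = 1) :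
    Function.Injective ⇑(SODmap (G := H₂) (H := G) H₂.subtype) := by
  apply (injective_iff_map_eq_zero _).mpr
  intro α hα
  obtain ⟨x, rfl⟩ := QuotientAddGroup.mk_surjective α
  rw [SODmap_mk, SOD_mk_eq_zero, kFMap_coe] at hα
  rw [SOD_mk_eq_zero]
  have h2 := Tmap_NSub H₂ hH₂ hα
  rwa [Tmap_FMap] at h2

lemma two_smul_FMap_mem (H₂ : Subgroup G) (hH₂ : ∀ g : G, g ∈ H₂ ↔ g ^ 2 = 1)
    (z : FreeAbelianGroup (NCC H₂)) : 2 • FMap H₂.subtype z ∈ NSub G := by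
  induction z using FreeAbelianGroup.induction_on with
  | zero => rw [map_zero, smul_zero]; exact (NSub G).zero_mem
  | of c =>
    obtain ⟨h, hh⟩ := ConjClasses.mk_surjective c.1
    have hne : h ≠ 1 := fun h1 => c.2 (by rw [← hh, h1, mk_eq_one_iff.mpr rfl])
    have hofc : (FreeAbelianGroup.of c : FreeAbelianGroup (NCC H₂)) = clsF H₂ h := by
      rw [clsF_ne hne]
      congr 1
      exact Subtype.ext hh.symm
    rw [hofc, show FMap H₂.subtype (clsF H₂ h) = clsF G (h : G) from FMap_clsF _ _, two_smul]
    apply AddSubgroup.subset_closure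
    refine ⟨(h : G), ?_⟩
    rw [inv_eq_self_of_sq ((hH₂ (h : G)).mp h.2)]
  | neg c ih => rw [map_neg, smul_neg]; exact (NSub G).neg_mem ih
  | add a b ha hb => rw [map_add, smul_add]; exact (NSub G).add_mem ha hb

lemma two_nsmul_SODmap (H₂ : Subgroup G) (hH₂ : ∀ g : G, g ∈ H₂ ↔ g ^ 2 = 1)
    (α : SOD H₂) : 2 • SODmap H₂.subtype α = 0 := by
  obtain ⟨x, rfl⟩ := QuotientAddGroup.mk_surjective α
  rw [SODmap_mk]
  rw [show HSMul.hSMul (α := ℕ) (β := SOD G) (γ := SOD G) 2 (QuotientAddGroup.mk (kFMap H₂.subtype x))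
      = QuotientAddGroup.mk (2 • kFMap H₂.subtype x) from
    (map_nsmul (QuotientAddGroup.mk' _) 2 _).symm, SOD_mk_eq_zero]
  have hco : ((2 • kFMap H₂.subtype x : (phi G).ker) : FreeAbelianGroup (NCC G))
      = 2 • FMap H₂.subtype (x : FreeAbelianGroup (NCC H₂)) :=
    map_nsmul ((phi G).ker.subtype) 2 _
  rw [hco]
  exact two_smul_FMap_mem H₂ hH₂ _

lemma torsion_in_image [Finite G] (H₂ : Subgroup G) (hH₂ : ∀ g : G, g ∈ H₂ ↔ g ^ 2 = 1)
    {β : SOD G} {k : ℕ} (hk : k ≠ 0) (hkβ : k • β = 0) :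
    ∃ α : SOD H₂, SODmap H₂.subtype α = β := by
  obtain ⟨x, rfl⟩ := QuotientAddGroup.mk_surjective β
  have h1 : @Eq (SOD G) (QuotientAddGroup.mk (k • x)) 0 := by
    rw [show (QuotientAddGroup.mk (k • x) : SOD G) = HSMul.hSMul (α := ℕ) (β := SOD G) (γ := SOD G) k (QuotientAddGroup.mk x) from
      map_nsmul (QuotientAddGroup.mk' _) k x, hkβ]
  rw [SOD_mk_eq_zero] at h1
  have hk2 : k • (x : FreeAbelianGroup (NCC G)) ∈ NSub G := by
    have hco : ((k • x : (phi G).ker) : FreeAbelianGroup (NCC G))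
        = k • (x : FreeAbelianGroup (NCC G)) := map_nsmul ((phi G).ker.subtype) k x
    rwa [hco] at h1
  let e : G ↪ ℕ := (nonempty_embedding_nat G).some
  have hfr : frMap e (x : FreeAbelianGroup (NCC G)) = 0 := by
    apply freeAb_torsion_free hk
    rw [← map_nsmul]
    exact frMap_NSub e hk2
  have hd := decomp e H₂ hH₂ (x : FreeAbelianGroup (NCC G))
  rw [hfr, sub_zero] at hd
  set z := Tmap H₂ hH₂ (x : FreeAbelianGroup (NCC G)) with hz
  have hphiF : phi G (FMap H₂.subtype z) = 0 := by
    have h3 := phi_NSub hd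
    rw [map_sub] at h3
    have h4 : phi G (x : FreeAbelianGroup (NCC G)) = 0 := x.2
    rw [h4, zero_sub, neg_eq_zero] at h3
    exact h3
  have hphiz : z ∈ (phi H₂).ker := AddMonoidHom.mem_ker.mpr (phi_sub_eq_zero H₂ hphiF)
  refine ⟨QuotientAddGroup.mk ⟨z, hphiz⟩, ?_⟩
  rw [SODmap_mk]
  apply QuotientAddGroup.eq.mpr
  rw [AddSubgroup.mem_addSubgroupOf]
  have hco2 : ((-(kFMap H₂.subtype ⟨z, hphiz⟩) + x : (phi G).ker) : FreeAbelianGroup (NCC G))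
      = -(FMap H₂.subtype z) + (x : FreeAbelianGroup (NCC G)) := rfl
  rw [hco2, neg_add_eq_sub]
  exact hd

end Main

/-- for a finite abelian group `G` with maximal elementary abelian
2-subgroup `H₂ = {x | x² = 1}`, the induction map `𝔹_{H₂} → 𝔹_G` is injective with image
the torsion subgroup of `𝔹_G`, which is an elementary abelian 2-group. -/
theorem stmt11 (G : Type*) [CommGroup G] [Finite G]
    (H₂ : Subgroup G) (hH₂ : ∀ g : G, g ∈ H₂ ↔ g ^ 2 = 1) :
    Function.Injective (SODmap H₂.subtype) ∧
    (∀ β : SOD G,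
      (∃ α : SOD H₂, SODmap H₂.subtype α = β) ↔ (∃ k : ℕ, k ≠ 0 ∧ k • β = 0)) ∧
    (∀ β : SOD G, (∃ k : ℕ, k ≠ 0 ∧ k • β = 0) → 2 • β = 0) := by
  refine ⟨SODmap_inj H₂ hH₂, fun β => ⟨?_, fun ⟨k, hk, hkβ⟩ => torsion_in_image H₂ hH₂ hk hkβ⟩,
    fun β ⟨k, hk, hkβ⟩ => ?_⟩
  · rintro ⟨α, rfl⟩
    exact ⟨2, by norm_num, two_nsmul_SODmap H₂ hH₂ α⟩
  · obtain ⟨α, rfl⟩ := torsion_in_image H₂ hH₂ hk hkβ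
    exact two_nsmul_SODmap H₂ hH₂ α

end SingOrbit
end

section
/- Let G be a finite group. Let S_G be the set of nontrivial conjugacy classes ĉ of G with ĉ = ĉ⁻¹, and let T_G be the set of conjugacy classes ĉ with ĉ ≠ ĉ⁻¹, so that |T_G| is even. Let G' = G/[G,G], let M ⊆ G' be the set of cosets x[G,G] that contain an element y whose conjugacy class satisfies ŷ = ŷ⁻¹, let K' be the subgroup of G' generated by M (an elementary abelian 2-group), and let n_{K'} be its rank. Then the group of singular orbit data satisfies 𝔹_G ≅ ℤ^{|T_G|/2} ⊕ (ℤ/2ℤ)^{|S_G| − n_{K'}}. -/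
namespace SingOrbit

variable (G : Type*) [Group G]

variable {G}

/-- The inverse of a conjugacy class. -/
def invC {G : Type*} [Group G] : ConjClasses G → ConjClasses G :=
  Quotient.lift (fun g : G => ConjClasses.mk g⁻¹) <| by
    intro a b hab
    rw [ConjClasses.mk_eq_mk_iff_isConj]
    obtain ⟨c, rfl⟩ := isConj_iff.mp (hab : IsConj a b)
    exact isConj_iff.mpr ⟨c, by group⟩

/-! ### Auxiliary development for stmt13 -/

section Aux

open Classical in
lemma invC_mk (x : G) : invC (ConjClasses.mk x) = ConjClasses.mk x⁻¹ := rfl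

lemma invC_invC (c : ConjClasses G) : invC (invC c) = c := by
  induction c using Quotient.inductionOn with
  | h a => show ConjClasses.mk (a⁻¹)⁻¹ = _; rw [inv_inv]; rfl

lemma invC_eq_one_iff {c : ConjClasses G} : invC c = 1 ↔ c = 1 := by
  induction c using Quotient.inductionOn with
  | h a =>
    show ConjClasses.mk a⁻¹ = 1 ↔ ConjClasses.mk a = 1
    rw [mk_eq_one_iff, mk_eq_one_iff, inv_eq_one]

variable (G) in
/-- The induced involution on nontrivial conjugacy classes. -/
noncomputable def sig : NCC G → NCC G :=
  fun c => ⟨invC c.1, fun h => c.2 (invC_eq_one_iff.mp h)⟩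

lemma sig_sig (c : NCC G) : sig G (sig G c) = c := by
  apply Subtype.ext; exact invC_invC c.1

end Aux

section Main
set_option linter.unusedSectionVars false
variable [Finite G]

instance : Finite (ConjClasses G) := Quotient.finite _
instance : Finite (NCC G) := inferInstanceAs (Finite {c : ConjClasses G // c ≠ 1})

open Classical

variable (G)

/-- Self-inversive nontrivial classes. -/
abbrev Spart : Type _ := {c : NCC G // sig G c = c}
/-- Chosen representatives of pairs of non-self-inversive classes. -/
abbrev Rpart : Type _ := {c : NCC G // sig G c ≠ c ∧ WellOrderingRel c (sig G c)}

noncomputable instance : Fintype (NCC G) := Fintype.ofFinite _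

/-- Target of the coordinate map. -/
abbrev W : Type _ := (Rpart G → ℤ) × (Spart G → ZMod 2)

/-- Coordinates on the free abelian group modulo `N`. -/
noncomputable def theta : (NCC G →₀ ℤ) →+ W G where
  toFun f := (fun r => f r.1 - f (sig G r.1), fun s => (f s.1 : ZMod 2))
  map_zero' := by
    refine Prod.ext (funext fun r => ?_) (funext fun s => ?_) <;> simp
  map_add' f g := by
    refine Prod.ext (funext fun r => ?_) (funext fun s => ?_)
    · show (f + g) r.1 - (f + g) (sig G r.1) = (f r.1 - f (sig G r.1)) + (g r.1 - g (sig G r.1))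
      rw [Finsupp.add_apply, Finsupp.add_apply]; ring
    · show (((f + g) s.1 : ℤ) : ZMod 2) = ((f s.1 : ℤ) : ZMod 2) + ((g s.1 : ℤ) : ZMod 2)
      rw [Finsupp.add_apply]; push_cast; ring

/-- The coordinate map from the free abelian group. -/
noncomputable def piW : FreeAbelianGroup (NCC G) →+ W G :=
  (theta G).comp (FreeAbelianGroup.equivFinsupp (NCC G)).toAddMonoidHom

end Main

section Main2
set_option linter.unusedSectionVars false
variable [Finite G]
open Classical

lemma sig_injective : Function.Injective (sig G) :=
  Function.LeftInverse.injective sig_sig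

lemma sig_mem_R' {r : NCC G} (hr : sig G r ≠ r ∧ WellOrderingRel r (sig G r)) :
    ¬ (sig G (sig G r) = sig G r) ∧ ¬ WellOrderingRel (sig G r) (sig G (sig G r)) := by
  rw [sig_sig]
  exact ⟨fun h => hr.1 h.symm, fun h => (Std.Asymm.asymm _ _ hr.2) h⟩

lemma R_of_not_R {j : NCC G} (h1 : sig G j ≠ j) (h2 : ¬ WellOrderingRel j (sig G j)) :
    sig G (sig G j) ≠ sig G j ∧ WellOrderingRel (sig G j) (sig G (sig G j)) := by
  rw [sig_sig]
  refine ⟨fun h => h1 h.symm, ?_⟩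
  rcases trichotomous_of (WellOrderingRel : NCC G → NCC G → Prop) j (sig G j)
    with h | h | h
  · exact absurd h h2
  · exact absurd h.symm h1
  · exact h

/-- Generators of `N` in Finsupp coordinates. -/
noncomputable def genF (i : NCC G) : NCC G →₀ ℤ :=
  Finsupp.single i 1 + Finsupp.single (sig G i) 1

lemma genF_mem_image (i : NCC G) :
    genF i ∈ (NSub G).map (FreeAbelianGroup.equivFinsupp (NCC G)).toAddMonoidHom := by
  obtain ⟨x, hx⟩ := Quotient.exists_rep i.1
  refine ⟨clsF G x + clsF G x⁻¹, AddSubgroup.subset_closure ⟨x, rfl⟩, ?_⟩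
  have hx' : ConjClasses.mk x = i.1 := hx
  have h1 : clsF G x = FreeAbelianGroup.of i := by
    rw [clsF, clsC, hx']
    exact dif_neg i.2 |>.trans (by congr)
  have h2 : clsF G x⁻¹ = FreeAbelianGroup.of (sig G i) := by
    rw [clsF, clsC]
    have : ConjClasses.mk x⁻¹ = invC i.1 := by rw [← hx']; rfl
    rw [this]
    refine (dif_neg ?_).trans (by rfl)
  rw [h1, h2, map_add, genF]
  simp [FreeAbelianGroup.equivFinsupp, FreeAbelianGroup.toFinsupp_of]

end Main2

section Main3
set_option linter.unusedSectionVars false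
variable [Finite G]
open Classical Finsupp

lemma genF_apply (i j : NCC G) :
    genF i j = (if j = i then (1:ℤ) else 0) + (if j = sig G i then 1 else 0) := by
  simp [genF, Finsupp.single_apply, eq_comm]

lemma sig_eq_iff {i j : NCC G} : sig G j = i ↔ j = sig G i := by
  constructor
  · rintro rfl; rw [sig_sig]
  · rintro rfl; rw [sig_sig]

lemma genF_apply_sig (i j : NCC G) : genF i (sig G j) = genF i j := by
  rw [genF_apply, genF_apply]
  have e1 : (sig G j = i) = (j = sig G i) := propext sig_eq_iff
  have e2 : (sig G j = sig G i) = (j = i) :=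
    propext ⟨fun h => sig_injective h, fun h => by rw [h]⟩
  rw [e1, e2, add_comm]

lemma theta_genF (i : NCC G) : theta G (genF i) = 0 := by
  have hsym := genF_apply_sig i
  apply Prod.ext
  · funext r
    show genF i r.1 - genF i (sig G r.1) = 0
    rw [hsym, sub_self]
  · funext x
    show ((genF i x.1 : ℤ) : ZMod 2) = 0
    obtain ⟨s, hs⟩ := x
    rw [ZMod.intCast_zmod_eq_zero_iff_dvd]
    by_cases hi : sig G i = i
    · rw [genF_apply, hi]
      split_ifs with h <;> norm_num
    · rw [genF_apply]
      have h1 : s ≠ i := fun h => hi (by rw [← h, hs])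
      have h2 : s ≠ sig G i := by
        intro h
        have : sig G s = i := by rw [h, sig_sig]
        rw [hs] at this
        exact hi (by rw [← this] at h ⊢; exact h.symm)
      rw [if_neg h1, if_neg h2]
      norm_num

end Main3

section Main4
set_option linter.unusedSectionVars false
variable [Finite G]
open Classical Finsupp

lemma clsF_eq_of {x : G} (h : ConjClasses.mk x ≠ 1) :
    clsF G x = FreeAbelianGroup.of ⟨ConjClasses.mk x, h⟩ := by
  rw [clsF, clsC]; exact dif_neg h

lemma clsF_inv_eq_of {x : G} (h : ConjClasses.mk x ≠ 1) :
    clsF G x⁻¹ = FreeAbelianGroup.of (sig G ⟨ConjClasses.mk x, h⟩) := by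
  rw [clsF, clsC]
  have h2 : ConjClasses.mk x⁻¹ = invC (ConjClasses.mk x) := rfl
  rw [h2]
  exact (dif_neg (fun hh => h (invC_eq_one_iff.mp hh))).trans rfl

lemma equivFinsupp_pair (i : NCC G) :
    (FreeAbelianGroup.equivFinsupp (NCC G)).toAddMonoidHom
      (FreeAbelianGroup.of i + FreeAbelianGroup.of (sig G i)) = genF i := by
  rw [map_add, genF]
  simp [FreeAbelianGroup.equivFinsupp, FreeAbelianGroup.toFinsupp_of]

lemma NSub_le_ker : NSub G ≤ (piW G).ker := by
  rw [NSub]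
  refine AddSubgroup.closure_le _ |>.mpr ?_
  rintro a ⟨x, rfl⟩
  by_cases h : ConjClasses.mk x = 1
  · have hx : x = 1 := mk_eq_one_iff.mp h
    subst hx
    have h0 : clsF G (1:G) = 0 := by rw [clsF, clsC]; exact dif_pos rfl
    simp only [SetLike.mem_coe, AddMonoidHom.mem_ker, inv_one, h0, add_zero, map_zero]
  · rw [clsF_eq_of h, clsF_inv_eq_of h]
    show piW G _ = 0
    rw [piW, AddMonoidHom.comp_apply]
    exact (congrArg (theta G) (equivFinsupp_pair _)).trans (theta_genF _)

-- helper facts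
lemma ne_S_of_not_fixed {j : NCC G} (hj : sig G j ≠ j) (s : Spart G) :
    j ≠ s.1 ∧ j ≠ sig G s.1 := by
  constructor
  · rintro rfl; exact hj s.2
  · rw [s.2]; rintro rfl; exact hj s.2

lemma r_eq_sig_j {j : NCC G} {r : Rpart G} (h : j = sig G r.1) : r.1 = sig G j := by
  rw [h, sig_sig]

lemma ker_le_NSub : (piW G).ker ≤ NSub G := by
  intro x hx
  set e := FreeAbelianGroup.equivFinsupp (NCC G) with he
  set f := e x with hf
  have hker : theta G f = 0 := hx
  have hA : ∀ r : Rpart G, f r.1 = f (sig G r.1) := by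
    intro r
    have := congrArg (fun w => w.1 r) hker
    simpa [theta, sub_eq_zero] using this
  have hB : ∀ s : Spart G, (2:ℤ) ∣ f s.1 := by
    intro s
    have h2 : ((f s.1 : ℤ) : ZMod 2) = 0 := congrArg (fun w => w.2 s) hker
    exact_mod_cast (ZMod.intCast_zmod_eq_zero_iff_dvd _ 2).mp h2
  have key : f = (∑ s : Spart G, (f s.1 / 2) • genF s.1)
      + (∑ r : Rpart G, f r.1 • genF r.1) := by
    ext j
    rw [Finsupp.add_apply, Finsupp.finset_sum_apply, Finsupp.finset_sum_apply]
    simp only [Finsupp.smul_apply, smul_eq_mul]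
    by_cases hj : sig G j = j
    · have hR0 : (∑ r : Rpart G, f r.1 * (genF r.1) j) = 0 := by
        refine Finset.sum_eq_zero (fun r _ => ?_)
        have h1 : j ≠ r.1 := fun h => r.2.1 (h ▸ hj)
        have h2 : j ≠ sig G r.1 := by
          intro h
          have hr : r.1 = sig G j := r_eq_sig_j h
          rw [hj] at hr
          exact r.2.1 (by rw [hr]; exact hj)
        rw [genF_apply, if_neg h1, if_neg h2]
        ring
      have hS1 : (∑ s : Spart G, f s.1 / 2 * (genF s.1) j) = f j / 2 * (genF j) j := by
        refine Finset.sum_eq_single_of_mem (⟨j, hj⟩ : Spart G) (Finset.mem_univ _)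
          (fun s _ hs => ?_)
        have h1 : j ≠ s.1 := fun h => hs (Subtype.ext h.symm)
        rw [genF_apply, if_neg h1, if_neg (by rw [s.2]; exact h1)]
        ring
      rw [hR0, hS1, genF_apply, if_pos rfl, if_pos hj.symm]
      have h2 := hB ⟨j, hj⟩
      simp only at h2 ⊢
      omega
    · have hS0 : (∑ s : Spart G, f s.1 / 2 * (genF s.1) j) = 0 := by
        refine Finset.sum_eq_zero (fun s _ => ?_)
        obtain ⟨h1, h2⟩ := ne_S_of_not_fixed hj s
        rw [genF_apply, if_neg h1, if_neg h2]
        ring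
      rw [hS0, zero_add]
      by_cases hjr : WellOrderingRel j (sig G j)
      · have hR1 : (∑ r : Rpart G, f r.1 * (genF r.1) j)
            = f j * (genF j) j := by
          refine Finset.sum_eq_single_of_mem (⟨j, hj, hjr⟩ : Rpart G) (Finset.mem_univ _)
            (fun r _ hr => ?_)
          have h1 : j ≠ r.1 := fun h => hr (Subtype.ext h.symm)
          have h2 : j ≠ sig G r.1 := by
            intro h
            have hrr := r.2.2
            rw [r_eq_sig_j h, sig_sig] at hrr
            exact Std.Asymm.asymm _ _ hjr hrr
          rw [genF_apply, if_neg h1, if_neg h2]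
          ring
        rw [hR1, genF_apply, if_pos rfl, if_neg (fun h => hj h.symm)]
        ring
      · have hr1 : sig G (sig G j) ≠ sig G j ∧ WellOrderingRel (sig G j) (sig G (sig G j)) :=
          R_of_not_R hj hjr
        have hR1 : (∑ r : Rpart G, f r.1 * (genF r.1) j)
            = f (sig G j) * (genF (sig G j)) j := by
          refine Finset.sum_eq_single_of_mem (⟨sig G j, hr1⟩ : Rpart G) (Finset.mem_univ _)
            (fun r _ hr => ?_)
          have h1 : j ≠ r.1 := fun h => hjr (h ▸ r.2.2)
          have h2 : j ≠ sig G r.1 := fun h => hr (Subtype.ext (r_eq_sig_j h))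
          rw [genF_apply, if_neg h1, if_neg h2]
          ring
        rw [hR1, genF_apply, sig_sig, if_pos rfl, if_neg (fun h => hj h.symm)]
        have hh := hA ⟨sig G j, hr1⟩
        simp only [sig_sig] at hh
        rw [← hh]
        ring
  have hmem : f ∈ (NSub G).map e.toAddMonoidHom := by
    rw [key]
    refine AddSubgroup.add_mem _ (AddSubgroup.sum_mem _ fun s _ => ?_)
      (AddSubgroup.sum_mem _ fun r _ => ?_)
    · exact AddSubgroup.zsmul_mem _ (genF_mem_image s.1) _
    · exact AddSubgroup.zsmul_mem _ (genF_mem_image r.1) _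
  obtain ⟨y, hy, hyx⟩ := hmem
  have hxy : y = x := e.injective hyx
  rwa [hxy] at hy

lemma ker_piW : (piW G).ker = NSub G := le_antisymm ker_le_NSub NSub_le_ker

end Main4

section Main5
set_option linter.unusedSectionVars false
variable [Finite G]
open Classical Finsupp

lemma theta_surj : Function.Surjective (theta G) := by
  rintro ⟨v, u⟩
  set g : NCC G → ℤ := fun j =>
    if h : sig G j = j then ((u ⟨j, h⟩).val : ℤ)
    else if h2 : WellOrderingRel j (sig G j) then v ⟨j, h, h2⟩ else 0 with hg
  refine ⟨Finsupp.equivFunOnFinite.symm g, ?_⟩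
  have happ : ∀ j, (Finsupp.equivFunOnFinite.symm g) j = g j := fun j => rfl
  refine Prod.ext (funext fun r => ?_) (funext fun s => ?_)
  · show (Finsupp.equivFunOnFinite.symm g) r.1 - (Finsupp.equivFunOnFinite.symm g) (sig G r.1) = v r
    rw [happ, happ, hg]
    obtain ⟨hr1, hr2⟩ := sig_mem_R' r.2
    simp only [dif_neg r.2.1, dif_pos r.2.2, dif_neg hr1, dif_neg hr2]
    simp [sub_zero]
  · show (((Finsupp.equivFunOnFinite.symm g) s.1 : ℤ) : ZMod 2) = u s
    rw [happ, hg]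
    simp only [dif_pos s.2]
    push_cast
    rw [ZMod.natCast_val, ZMod.cast_id]

lemma piW_surj : Function.Surjective (piW G) := fun w => by
  obtain ⟨f, hf⟩ := theta_surj (G := G) w
  exact ⟨(FreeAbelianGroup.equivFinsupp (NCC G)).symm f, by
    simp only [piW, AddMonoidHom.comp_apply, AddEquiv.coe_toAddMonoidHom,
      AddEquiv.apply_symm_apply, hf]⟩

lemma NSub_le_ker_phi : NSub G ≤ (phi G).ker := by
  rw [NSub]
  refine AddSubgroup.closure_le _ |>.mpr ?_
  rintro a ⟨x, rfl⟩
  show phi G _ = 0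
  rw [map_add, phi_clsF, phi_clsF]
  rw [← ofMul_mul, ← map_mul, mul_inv_cancel]
  simp

variable (G) in
/-- The map `Φ` on coordinates induced by `φ`. -/
noncomputable def Phi : W G →+ Additive (Abelianization G) :=
  (QuotientAddGroup.lift (piW G).ker (phi G) (ker_piW (G := G) ▸ NSub_le_ker_phi)).comp
    ((QuotientAddGroup.quotientKerEquivOfSurjective (piW G) piW_surj).symm : W G →+ _)

lemma Phi_piW (x : FreeAbelianGroup (NCC G)) : Phi G (piW G x) = phi G x := by
  have h : (QuotientAddGroup.quotientKerEquivOfSurjective (piW G) piW_surj).symm (piW G x)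
      = QuotientAddGroup.mk x := by
    apply (QuotientAddGroup.quotientKerEquivOfSurjective (piW G) piW_surj).injective
    simp only [AddEquiv.apply_symm_apply]
    rfl
  simp only [Phi, AddMonoidHom.comp_apply, AddMonoidHom.coe_coe, h]
  rfl

variable (G) in
/-- Restriction of `π` to `ker φ`. -/
noncomputable def rho : (phi G).ker →+ W G := (piW G).comp (phi G).ker.subtype

lemma rho_ker : (rho G).ker = (NSub G).addSubgroupOf (phi G).ker := by
  ext x
  rw [AddMonoidHom.mem_ker, AddSubgroup.mem_addSubgroupOf, ← ker_piW]
  rfl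

lemma rho_range : (rho G).range = (Phi G).ker := by
  ext w
  constructor
  · rintro ⟨x, rfl⟩
    show Phi G (piW G x.1) = 0
    rw [Phi_piW]
    exact x.2
  · intro hw
    obtain ⟨x, rfl⟩ := piW_surj (G := G) w
    have hker : x ∈ (phi G).ker := by
      rw [AddMonoidHom.mem_ker, ← Phi_piW]
      exact hw
    exact ⟨⟨x, hker⟩, rfl⟩

variable (G) in
/-- `SOD G` is the kernel of `Φ`. -/
noncomputable def sodEquivKerPhi : SOD G ≃+ (Phi G).ker :=
  ((QuotientAddGroup.quotientAddEquivOfEq (rho_ker (G := G)).symm).trans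
    (QuotientAddGroup.quotientKerEquivRange (rho G))).trans
    (AddEquiv.addSubgroupCongr (rho_range (G := G)))

end Main5

/-- Generic splitting lemma for abelian groups. -/
noncomputable def splitting {M N : Type*} [AddCommGroup M] [AddCommGroup N] (p : M →+ N)
    (sec : N →+ M) (h : ∀ n, p (sec n) = n) : M ≃+ (p.ker × N) where
  toFun m := (⟨m - sec (p m), by simp [AddMonoidHom.mem_ker, h]⟩, p m)
  invFun x := x.1.1 + sec x.2
  left_inv m := by simp
  right_inv x := by
    obtain ⟨⟨k, hk⟩, n⟩ := x
    rw [AddMonoidHom.mem_ker] at hk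
    refine Prod.ext (Subtype.ext ?_) ?_
    · show k + sec n - sec (p (k + sec n)) = k
      rw [map_add, hk, zero_add, h]
      abel
    · show p (k + sec n) = n
      rw [map_add, hk, zero_add, h]
  map_add' a b := by
    refine Prod.ext (Subtype.ext ?_) ?_
    · show (a + b) - sec (p (a + b)) = (a - sec (p a)) + (b - sec (p b))
      rw [map_add, map_add]
      abel
    · exact map_add p a b

section Main6
set_option linter.unusedSectionVars false
variable [Finite G]
open Classical

instance : Finite (Abelianization G) := Quotient.finite _

variable (G)

/-- The `S`-part of `Φ`. -/
noncomputable def psiS : (Spart G → ZMod 2) →+ Additive (Abelianization G) :=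
  (Phi G).comp (AddMonoidHom.inr _ _)

/-- The `R`-part of `Φ`. -/
noncomputable def chiR : (Rpart G → ℤ) →+ Additive (Abelianization G) :=
  (Phi G).comp (AddMonoidHom.inl _ _)

lemma Phi_eq (v : Rpart G → ℤ) (u : Spart G → ZMod 2) :
    Phi G (v, u) = chiR G v + psiS G u := by
  rw [chiR, psiS, AddMonoidHom.comp_apply, AddMonoidHom.comp_apply, ← map_add]
  congr 1
  exact Prod.ext (by simp) (by simp)

/-- The preimage under `χ` of the range of `ψ`, as a `ℤ`-submodule. -/
noncomputable def Qsub : Submodule ℤ (Rpart G → ℤ) :=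
  ((AddSubgroup.toIntSubmodule (psiS G).range).comap (chiR G).toIntLinearMap)

lemma mem_Qsub {v : Rpart G → ℤ} : v ∈ Qsub G ↔ chiR G v ∈ (psiS G).range := Iff.rfl

lemma ker_decomp (w : (Phi G).ker) : chiR G w.1.1 + psiS G w.1.2 = 0 :=
  (Phi_eq G w.1.1 w.1.2).symm.trans w.2

/-- Projection from `ker Φ` onto `Q`. -/
noncomputable def pProj : (Phi G).ker →+ (Qsub G) where
  toFun w := ⟨w.1.1, by
    have hw := ker_decomp G w
    exact ⟨-w.1.2, (map_neg _ _).trans (eq_neg_of_add_eq_zero_left hw).symm⟩⟩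
  map_zero' := rfl
  map_add' a b := rfl

lemma pProj_surjective : Function.Surjective (pProj G) := by
  rintro ⟨v, hv⟩
  obtain ⟨u, hu⟩ := (mem_Qsub G).mp hv
  refine ⟨⟨(v, -u), ?_⟩, rfl⟩
  show Phi G (v, -u) = 0
  rw [Phi_eq, map_neg, hu, add_neg_cancel]

/-- The kernel of the projection is the kernel of `ψ`. -/
noncomputable def kerPProjEquiv : ((pProj G).ker) ≃+ (psiS G).ker where
  toFun w := ⟨w.1.1.2, by
    have h0 : w.1.1.1 = 0 := congrArg Subtype.val w.2
    have := ker_decomp G w.1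
    rw [h0, map_zero, zero_add] at this
    exact this⟩
  invFun u := ⟨⟨(0, u.1), by show Phi G (0, u.1) = 0; rw [Phi_eq, map_zero, zero_add]; exact u.2⟩,
    Subtype.ext rfl⟩
  left_inv w := by
    refine Subtype.ext (Subtype.ext (Prod.ext ?_ rfl))
    exact (congrArg Subtype.val w.2).symm
  right_inv u := rfl
  map_add' a b := rfl

end Main6

section Main7
set_option linter.unusedSectionVars false
variable [Finite G]
open Classical
variable (G)

instance : Module.Finite ℤ (Qsub G) :=
  Module.Finite.iff_fg.mpr (IsNoetherian.noetherian _)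

lemma card_abel_smul_mem_Qsub (v : Rpart G → ℤ) :
    (Nat.card (Abelianization G) : ℤ) • v ∈ Qsub G := by
  rw [mem_Qsub, map_zsmul]
  have h0 : (Nat.card (Abelianization G) : ℤ) • chiR G v = 0 := by
    rw [natCast_zsmul]
    exact card_nsmul_eq_zero'
  rw [h0]
  exact zero_mem _

lemma finrank_Qsub : Module.finrank ℤ (Qsub G) = Fintype.card (Rpart G) := by
  refine le_antisymm ((Submodule.finrank_le _).trans_eq
    (Module.finrank_fintype_fun_eq_card ℤ)) ?_
  have hn : (Nat.card (Abelianization G) : ℤ) ≠ 0 :=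
    Int.natCast_ne_zero.mpr Nat.card_pos.ne'
  set f : (Rpart G → ℤ) →ₗ[ℤ] Qsub G :=
    { toFun := fun v => ⟨(Nat.card (Abelianization G) : ℤ) • v, card_abel_smul_mem_Qsub G v⟩
      map_add' := fun a b => by ext; simp [smul_add]; ring
      map_smul' := fun c a => by ext; simp [smul_comm]; ring } with hf
  have hinj : Function.Injective f := by
    intro a b hab
    have h2 : (Nat.card (Abelianization G) : ℤ) • a = (Nat.card (Abelianization G) : ℤ) • b :=
      congrArg Subtype.val hab
    exact smul_right_injective _ hn h2
  calc Fintype.card (Rpart G) = Module.finrank ℤ (Rpart G → ℤ) :=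
        (Module.finrank_fintype_fun_eq_card ℤ).symm
    _ ≤ Module.finrank ℤ (Qsub G) := LinearMap.finrank_le_finrank_of_injective hinj

/-- A linear section of the projection onto the free part. -/
noncomputable def secQ : (Qsub G) →ₗ[ℤ] (Phi G).ker :=
  (Module.finBasis ℤ (Qsub G)).constr ℤ
    (fun i => Classical.choose (pProj_surjective G (Module.finBasis ℤ (Qsub G) i)))

lemma pProj_secQ (q : Qsub G) : pProj G (secQ G q) = q := by
  have h : (pProj G).toIntLinearMap.comp (secQ G) = LinearMap.id := by
    refine Module.Basis.ext (Module.finBasis ℤ (Qsub G)) (fun i => ?_)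
    rw [LinearMap.comp_apply, secQ, Module.Basis.constr_basis]
    exact Classical.choose_spec (pProj_surjective G (Module.finBasis ℤ (Qsub G) i))
  have h2 := LinearMap.congr_fun h q
  simpa using h2

/-- Splitting of the kernel of `Φ`. -/
noncomputable def kerPhiSplit : (Phi G).ker ≃+ ((pProj G).ker × (Qsub G)) :=
  splitting (pProj G) (secQ G).toAddMonoidHom (fun q => pProj_secQ G q)

/-- The free part is `ℤ^(card Rpart)`. -/
noncomputable def qsubEquiv : (Qsub G) ≃+ (Fin (Module.finrank ℤ (Qsub G)) → ℤ) :=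
  (Module.finBasis ℤ (Qsub G)).equivFun.toAddEquiv

end Main7

section Main8
set_option linter.unusedSectionVars false
variable [Finite G]
open Classical
variable (G)

lemma piW_of_spart (s : Spart G) :
    piW G (FreeAbelianGroup.of s.1) = ((0 : Rpart G → ℤ), Pi.single s (1 : ZMod 2)) := by
  have h : (FreeAbelianGroup.equivFinsupp (NCC G)).toAddMonoidHom (FreeAbelianGroup.of s.1)
      = Finsupp.single s.1 1 := by
    simp [FreeAbelianGroup.equivFinsupp, FreeAbelianGroup.toFinsupp_of]
  rw [piW, AddMonoidHom.comp_apply, h]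
  refine Prod.ext (funext fun r => ?_) (funext fun s' => ?_)
  · show Finsupp.single s.1 1 r.1 - Finsupp.single s.1 1 (sig G r.1) = 0
    have h1 : s.1 ≠ r.1 := fun h => r.2.1 (by rw [← h, s.2])
    have h2 : s.1 ≠ sig G r.1 := by
      intro h
      exact (sig_mem_R' r.2).1 (by rw [← h, s.2, h])
    rw [Finsupp.single_apply, Finsupp.single_apply, if_neg h1, if_neg h2, sub_zero]
  · show ((Finsupp.single s.1 1 s'.1 : ℤ) : ZMod 2) = (Pi.single s (1:ZMod 2) : Spart G → ZMod 2) s'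
    by_cases hss : s' = s
    · subst hss
      rw [Finsupp.single_apply, if_pos rfl, Pi.single_eq_same]
      norm_num
    · have h1 : s.1 ≠ s'.1 := fun h => hss (Subtype.ext (Subtype.ext (congrArg Subtype.val h))).symm
      rw [Finsupp.single_apply, if_neg h1, Pi.single_eq_of_ne hss]
      norm_num

lemma psiS_single (s : Spart G) : psiS G (Pi.single s 1) = classAb G s.1.1 := by
  have h : psiS G (Pi.single s 1) = Phi G ((0 : Rpart G → ℤ), Pi.single s (1 : ZMod 2)) := rfl
  rw [h, ← piW_of_spart, Phi_piW, phi_of]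

lemma top_gen : AddSubgroup.closure (Set.range fun s : Spart G => Pi.single s (1:ZMod 2))
    = (⊤ : AddSubgroup (Spart G → ZMod 2)) := by
  rw [eq_top_iff]
  intro u _
  rw [← Finset.univ_sum_single u]
  refine AddSubgroup.sum_mem _ fun s _ => ?_
  have hz : ∀ z : ZMod 2, z = 0 ∨ z = 1 := by decide
  rcases hz (u s) with h | h
  · rw [h, Pi.single_zero]; exact zero_mem _
  · rw [h]; exact AddSubgroup.subset_closure ⟨s, rfl⟩

lemma range_psiS : (psiS G).range = Subgroup.toAddSubgroup
    (Subgroup.closure {x : Abelianization G | ∃ y : G, Abelianization.of y = x ∧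
      invC (ConjClasses.mk y) = ConjClasses.mk y}) := by
  rw [AddMonoidHom.range_eq_map, ← top_gen, AddMonoidHom.map_closure]
  apply le_antisymm
  · rw [AddSubgroup.closure_le]
    rintro a ⟨-, ⟨s, rfl⟩, rfl⟩
    show psiS G (Pi.single s 1) ∈ _
    rw [psiS_single]
    obtain ⟨y, hy⟩ := Quotient.exists_rep s.1.1
    have hy' : ConjClasses.mk y = s.1.1 := hy
    rw [← hy', classAb_mk]
    have hmem : Abelianization.of y ∈ Subgroup.closure {x : Abelianization G | ∃ y : G,
        Abelianization.of y = x ∧ invC (ConjClasses.mk y) = ConjClasses.mk y} := by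
      refine Subgroup.subset_closure ⟨y, rfl, ?_⟩
      rw [hy']
      exact congrArg Subtype.val s.2
    exact hmem
  · have hle : Subgroup.closure {x : Abelianization G | ∃ y : G, Abelianization.of y = x ∧
        invC (ConjClasses.mk y) = ConjClasses.mk y} ≤ Subgroup.toAddSubgroup.symm
        (AddSubgroup.closure (⇑(psiS G) '' Set.range fun s : Spart G => Pi.single s (1:ZMod 2))) := by
      rw [Subgroup.closure_le]
      rintro x ⟨y, rfl, hy⟩
      by_cases h1 : ConjClasses.mk y = 1
      · have : y = 1 := mk_eq_one_iff.mp h1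
        subst this
        rw [map_one]
        exact one_mem _
      · set s : Spart G := ⟨⟨ConjClasses.mk y, h1⟩, Subtype.ext hy⟩ with hs
        have hgen : psiS G (Pi.single s 1) ∈ AddSubgroup.closure
            (⇑(psiS G) '' Set.range fun s : Spart G => Pi.single s (1:ZMod 2)) :=
          AddSubgroup.subset_closure ⟨Pi.single s 1, ⟨s, rfl⟩, rfl⟩
        rw [psiS_single] at hgen
        exact hgen
    exact fun a ha => hle ha

lemma card_spart_eq : Nat.card {c : ConjClasses G // c ≠ 1 ∧ invC c = c}
    = Fintype.card (Spart G) := by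
  rw [← Nat.card_eq_fintype_card]
  refine Nat.card_congr ⟨fun c => ⟨⟨c.1, c.2.1⟩, Subtype.ext c.2.2⟩,
    fun s => ⟨s.1.1, s.1.2, congrArg Subtype.val s.2⟩, fun c => rfl, fun s => rfl⟩

lemma card_tpart : Nat.card {c : ConjClasses G // invC c ≠ c}
    = 2 * Fintype.card (Rpart G) := by
  have e1 : {c : ConjClasses G // invC c ≠ c} ≃ {j : NCC G // sig G j ≠ j} :=
    { toFun := fun c => ⟨⟨c.1, fun h => c.2 (by rw [h]; exact invC_eq_one_iff.mpr rfl)⟩,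
        fun h => c.2 (congrArg Subtype.val h)⟩
      invFun := fun j => ⟨j.1.1, fun h => j.2 (Subtype.ext h)⟩
      left_inv := fun c => rfl
      right_inv := fun j => rfl }
  have e2 : {j : {j : NCC G // sig G j ≠ j} // WellOrderingRel j.1 (sig G j.1)} ≃ Rpart G :=
    { toFun := fun j => ⟨j.1.1, j.1.2, j.2⟩
      invFun := fun r => ⟨⟨r.1, r.2.1⟩, r.2.2⟩
      left_inv := fun j => rfl
      right_inv := fun r => rfl }
  have e3 : {j : {j : NCC G // sig G j ≠ j} // ¬ WellOrderingRel j.1 (sig G j.1)} ≃ Rpart G :=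
    { toFun := fun j => ⟨sig G j.1.1, R_of_not_R j.1.2 j.2⟩
      invFun := fun r => ⟨⟨sig G r.1, (sig_mem_R' r.2).1⟩, (sig_mem_R' r.2).2⟩
      left_inv := fun j => Subtype.ext (Subtype.ext (sig_sig j.1.1))
      right_inv := fun r => Subtype.ext (sig_sig r.1) }
  have e4 := (Equiv.sumCompl (fun j : {j : NCC G // sig G j ≠ j} =>
    WellOrderingRel j.1 (sig G j.1))).symm
  have e := e1.trans (e4.trans (Equiv.sumCongr e2 e3))
  rw [Nat.card_congr e, Nat.card_sum, Nat.card_eq_fintype_card]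
  ring

lemma card_ker_psiS_mul : Nat.card (psiS G).ker * Nat.card (psiS G).range
    = 2 ^ Fintype.card (Spart G) := by
  have h1 := AddSubgroup.card_eq_card_quotient_mul_card_addSubgroup (psiS G).ker
  have h2 : Nat.card ((Spart G → ZMod 2) ⧸ (psiS G).ker) = Nat.card (psiS G).range :=
    Nat.card_congr (QuotientAddGroup.quotientKerEquivRange (psiS G)).toEquiv
  have h3 : Nat.card (Spart G → ZMod 2) = 2 ^ Fintype.card (Spart G) := by
    rw [Nat.card_eq_fintype_card, Fintype.card_fun, ZMod.card]
  rw [h3.symm, h1, h2]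
  ring

end Main8

/-- the main theorem.  For a finite group `G`, with `S_G` the set of
nontrivial self-inversive conjugacy classes, `T_G` the set of conjugacy classes distinct
from their inverses, and `n_{K'}` the rank of the subgroup `K'` of `G/[G,G]` generated by
the cosets containing an element whose class is self-inversive,
`𝔹_G ≅ ℤ^(|T_G|/2) ⊕ (ℤ/2ℤ)^(|S_G| - n_{K'})`. -/
theorem stmt13 (G : Type*) [Group G] [Finite G] (s t nK : ℕ)
    (hs : s = Nat.card {c : ConjClasses G // c ≠ 1 ∧ invC c = c})
    (ht : t = Nat.card {c : ConjClasses G // invC c ≠ c})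
    (K' : Subgroup (Abelianization G))
    (hK' : K' = Subgroup.closure
      {x : Abelianization G | ∃ y : G, Abelianization.of y = x ∧
        invC (ConjClasses.mk y) = ConjClasses.mk y})
    (hnK : Nat.card K' = 2 ^ nK) :
    Nonempty (SOD G ≃+ (Fin (t / 2) → ℤ) × (Fin (s - nK) → ZMod 2)) := by
  classical
  haveI : Fact (Nat.Prime 2) := ⟨Nat.prime_two⟩
  have hsS : s = Fintype.card (Spart G) := by rw [hs, card_spart_eq]
  have htR : t / 2 = Fintype.card (Rpart G) := by rw [ht, card_tpart]; omega
  have hrange : Nat.card (psiS G).range = 2 ^ nK := by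
    rw [range_psiS, ← hK']
    have hcc : Nat.card (Subgroup.toAddSubgroup K') = Nat.card K' :=
      Nat.card_congr ⟨fun x => ⟨x.1, x.2⟩, fun x => ⟨x.1, x.2⟩, fun _ => rfl, fun _ => rfl⟩
    rw [hcc]
    exact hnK
  have hdom : Nat.card (psiS G).ker * 2 ^ nK = 2 ^ s := by
    rw [← hrange, card_ker_psiS_mul, hsS]
  have hnKle : nK ≤ s := by
    have hdvd : (2:ℕ) ^ nK ∣ 2 ^ s := ⟨Nat.card (psiS G).ker, by rw [← hdom]; ring⟩
    exact (Nat.pow_dvd_pow_iff_le_right one_lt_two).mp hdvd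
  have hker : Nat.card (psiS G).ker = 2 ^ (s - nK) := by
    have h2 : 2 ^ (s - nK) * 2 ^ nK = 2 ^ s := by
      rw [← pow_add]
      congr 1
      omega
    exact Nat.eq_of_mul_eq_mul_right (Nat.pow_pos (n := nK) two_pos) (hdom.trans h2.symm)
  -- torsion part
  set P := AddSubgroup.toZModSubmodule 2 (psiS G).ker with hPdef
  have ePk : ((psiS G).ker ≃+ P) :=
    ⟨⟨fun x => ⟨x.1, x.2⟩, fun x => ⟨x.1, x.2⟩, fun _ => rfl, fun _ => rfl⟩, fun _ _ => rfl⟩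
  haveI : Fintype P := Fintype.ofFinite _
  have hcP : Nat.card P = 2 ^ (s - nK) := by
    rw [← Nat.card_congr ePk.toEquiv]
    exact hker
  have hcardP : Fintype.card P = 2 ^ (s - nK) := by rw [← Nat.card_eq_fintype_card]; exact hcP
  have hfr : Module.finrank (ZMod 2) P = s - nK := by
    have hc := Module.card_eq_pow_finrank (K := ZMod 2) (V := P)
    rw [ZMod.card, hcardP] at hc
    exact Nat.pow_right_injective le_rfl hc.symm
  have eP := (Module.finBasis (ZMod 2) P).equivFun.toAddEquiv
  rw [hfr] at eP
  -- free part
  have eQ := qsubEquiv G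
  have hfrQ : Module.finrank ℤ (Qsub G) = t / 2 := by rw [finrank_Qsub, htR]
  rw [hfrQ] at eQ
  refine ⟨((sodEquivKerPhi G).trans ((kerPhiSplit G).trans ?_))⟩
  exact (AddEquiv.prodCongr ((kerPProjEquiv G).trans (ePk.trans eP)) eQ).trans AddEquiv.prodComm

end SingOrbit
end
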